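/- The block-structured matrix K has exactly three distinct eigenvalues when γ_d > γ_c > γ_n > 0: λ_single = γ_d - γ_c with multiplicity N - C, λ_class = λ_single + m(γ_c - γ_n) with multiplicity C - 1, and λ_global = λ_class + Nγ_n with multiplicity 1; in particular K is positive definite. -/

import Mathlib

open Matrix

/-- Auxiliary: class-sum linear map. -/
def stmt3Smap (C m : ℕ) : ((Fin C × Fin m) → ℝ) →ₗ[ℝ] (Fin C → ℝ) where
  toFun v c := ∑ k, v (c, k)
  map_add' u v := by ext c; simp [Finset.sum_add_distrib]
  map_smul' r v := by ext c; simp [Finset.mul_sum]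

/-- Auxiliary: class-constant extension linear map. -/
def stmt3Phi (C m : ℕ) : (Fin C → ℝ) →ₗ[ℝ] ((Fin C × Fin m) → ℝ) where
  toFun a i := a i.1
  map_add' u v := rfl
  map_smul' r v := rfl

/-- Auxiliary: total-sum functional. -/
def stmt3sumF (C : ℕ) : (Fin C → ℝ) →ₗ[ℝ] ℝ where
  toFun a := ∑ c, a c
  map_add' u v := by simp [Finset.sum_add_distrib]
  map_smul' r v := by simp [Finset.mul_sum]

@[simp] lemma stmt3Smap_apply (C m : ℕ) (v : (Fin C × Fin m) → ℝ) (c : Fin C) :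
    stmt3Smap C m v c = ∑ k, v (c, k) := rfl

@[simp] lemma stmt3Phi_apply (C m : ℕ) (a : Fin C → ℝ) (i : Fin C × Fin m) :
    stmt3Phi C m a i = a i.1 := rfl

@[simp] lemma stmt3sumF_apply (C : ℕ) (a : Fin C → ℝ) :
    stmt3sumF C a = ∑ c, a c := rfl

set_option maxHeartbeats 1000000 in
/-- The block-structured matrix `K` (with `γd > γc > γn > 0`) has exactly the three
eigenvalues `λ_single = γd - γc` (multiplicity `N - C`),
`λ_class = λ_single + m (γc - γn)` (multiplicity `C - 1`), and
`λ_global = λ_class + N γn` (multiplicity `1`), where `N = m C`; moreover `K` is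
positive definite. -/
theorem stmt_3 (C m : ℕ) (hC : 2 ≤ C) (hm : 2 ≤ m) (γd γc γn : ℝ)
    (h1 : γc < γd) (h2 : γn < γc) (h3 : 0 < γn)
    (K : Matrix (Fin C × Fin m) (Fin C × Fin m) ℝ)
    (hK : ∀ i j, K i j = if i = j then γd else if i.1 = j.1 then γc else γn) :
    (∀ μ : ℝ, Module.End.HasEigenvalue (Matrix.toLin' K) μ ↔
        (μ = γd - γc ∨ μ = (γd - γc) + (m : ℝ) * (γc - γn) ∨
          μ = (γd - γc) + (m : ℝ) * (γc - γn) + ((m : ℝ) * (C : ℝ)) * γn)) ∧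
    Module.finrank ℝ (Module.End.eigenspace (Matrix.toLin' K) (γd - γc)) = m * C - C ∧
    Module.finrank ℝ
      (Module.End.eigenspace (Matrix.toLin' K) ((γd - γc) + (m : ℝ) * (γc - γn))) = C - 1 ∧
    Module.finrank ℝ
      (Module.End.eigenspace (Matrix.toLin' K)
        ((γd - γc) + (m : ℝ) * (γc - γn) + ((m : ℝ) * (C : ℝ)) * γn)) = 1 ∧
    K.PosDef := by
  haveI : NeZero m := ⟨by omega⟩
  haveI : NeZero C := ⟨by omega⟩
  set f := Matrix.toLin' K with hfdef
  -- abbreviations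
  set lam1 : ℝ := γd - γc with hlam1
  set lam2 : ℝ := (γd - γc) + (m : ℝ) * (γc - γn) with hlam2
  set lam3 : ℝ := (γd - γc) + (m : ℝ) * (γc - γn) + ((m : ℝ) * (C : ℝ)) * γn with hlam3
  have hmpos : (0:ℝ) < m := by positivity
  have hCpos : (0:ℝ) < C := by positivity
  have hcn : (0:ℝ) < γc - γn := by linarith
  have hdc : (0:ℝ) < γd - γc := by linarith
  -- the fundamental computation
  have hApply : ∀ (v : Fin C × Fin m → ℝ) (i : Fin C × Fin m),
      f v i = lam1 * v i + (γc - γn) * (∑ k, v (i.1, k)) + γn * (∑ j, v j) := by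
    intro v i
    have h0 : f v i = ∑ j, K i j * v j := by
      simp [hfdef, Matrix.toLin'_apply, Matrix.mulVec, dotProduct]
    have e1 : ∑ j, (if i = j then γd - γc else 0) * v j = (γd - γc) * v i := by
      simp [ite_mul, Finset.sum_ite_eq]
    have e2 : (∑ j : Fin C × Fin m, (if i.1 = j.1 then γc - γn else 0) * v j)
        = (γc - γn) * (∑ k, v (i.1, k)) := by
      rw [Fintype.sum_prod_type]
      rw [show (∑ c, ∑ k, (if i.1 = c then γc - γn else 0) * v (c, k))
          = ∑ c, (if i.1 = c then ∑ k, (γc - γn) * v (c, k) else 0) by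
        apply Finset.sum_congr rfl; intro c _
        by_cases h : i.1 = c <;> simp [h]]
      rw [Finset.sum_ite_eq]
      simp [Finset.mul_sum]
    have e3 : (∑ j : Fin C × Fin m, γn * v j) = γn * (∑ j, v j) := by
      simp [Finset.mul_sum]
    have hsplit : ∀ j, K i j * v j =
        (if i = j then γd - γc else 0) * v j +
        ((if i.1 = j.1 then γc - γn else 0) * v j + γn * v j) := by
      intro j
      rw [hK]
      by_cases h : i = j
      · simp [h]; ring
      · by_cases h2 : i.1 = j.1 <;> simp [h, h2] <;> ring
    rw [h0, Finset.sum_congr rfl fun j _ => hsplit j, Finset.sum_add_distrib,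
      Finset.sum_add_distrib, e1, e2, e3, add_assoc, hlam1]
  -- membership criterion for eigenspaces
  have hmem : ∀ (μ : ℝ) (v : Fin C × Fin m → ℝ),
      v ∈ Module.End.eigenspace f μ ↔
      ∀ i : Fin C × Fin m, (μ - lam1) * v i
        = (γc - γn) * (∑ k, v (i.1, k)) + γn * (∑ j, v j) := by
    intro μ v
    rw [Module.End.mem_eigenspace_iff]
    constructor
    · intro h i
      have := congrFun h i
      rw [hApply] at this
      simp only [Pi.smul_apply, smul_eq_mul] at this
      linarith [this]
    · intro h
      funext i
      rw [hApply]
      have := h i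
      simp only [Pi.smul_apply, smul_eq_mul]
      linarith [this]
  -- pairwise form of the criterion
  have hmem' : ∀ (μ : ℝ) (v : Fin C × Fin m → ℝ),
      v ∈ Module.End.eigenspace f μ ↔
      ∀ (c : Fin C) (k : Fin m), (μ - lam1) * v (c, k)
        = (γc - γn) * (∑ k', v (c, k')) + γn * (∑ j, v j) := by
    intro μ v
    rw [hmem]
    constructor
    · intro h c k; exact h (c, k)
    · intro h i
      have := h i.1 i.2
      rw [Prod.mk.eta] at this
      exact this
  -- total sum as sum of class sums
  have hTsum : ∀ v : Fin C × Fin m → ℝ, (∑ j, v j) = ∑ c, ∑ k, v (c, k) := by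
    intro v; rw [Fintype.sum_prod_type]
  have cardFm : ∑ k : Fin m, (1:ℝ) = (m:ℝ) := by simp
  -- eigenspace for lam1 is the kernel of the class-sum map
  have hE1 : Module.End.eigenspace f lam1 = LinearMap.ker (stmt3Smap C m) := by
    ext v
    rw [hmem, LinearMap.mem_ker, funext_iff]
    constructor
    · intro h
      have hSrel : ∀ c : Fin C,
          (γc - γn) * (∑ k, v (c, k)) + γn * (∑ j, v j) = 0 := by
        intro c
        have := h (c, 0)
        simpa using this.symm
      have hT0 : (∑ j, v j) = 0 := by
        have h4 : ∑ c : Fin C, ((γc - γn) * (∑ k, v (c, k)) + γn * (∑ j, v j)) = 0 := by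
          simp [hSrel]
        rw [Finset.sum_add_distrib, ← Finset.mul_sum, ← hTsum v, Finset.sum_const,
          Finset.card_univ, Fintype.card_fin, nsmul_eq_mul] at h4
        have hpos : (0:ℝ) < (γc - γn) + (C:ℝ) * γn := by positivity
        nlinarith [h4, hpos]
      intro c
      have := hSrel c
      rw [hT0, mul_zero, add_zero] at this
      have := mul_eq_zero.mp this
      simp only [stmt3Smap_apply, Pi.zero_apply]
      rcases this with h' | h'
      · exact absurd h' (by linarith)
      · exact h'
    · intro h i
      have hT0 : (∑ j, v j) = 0 := by
        rw [hTsum v]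
        apply Finset.sum_eq_zero
        intro c _
        simpa using h c
      have := h i.1
      simp only [stmt3Smap_apply, Pi.zero_apply] at this
      rw [this, hT0]
      ring
  have hrank1 : Module.finrank ℝ (Module.End.eigenspace f lam1) = m * C - C := by
    rw [hE1]
    have hSsurj : Function.Surjective (stmt3Smap C m) := by
      intro a
      refine ⟨fun i => a i.1 / m, ?_⟩
      funext c
      simp only [stmt3Smap_apply]
      rw [Finset.sum_const, Finset.card_univ, Fintype.card_fin, nsmul_eq_mul]
      field_simp
    have hrn := LinearMap.finrank_range_add_finrank_ker (stmt3Smap C m)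
    rw [LinearMap.range_eq_top.mpr hSsurj, finrank_top,
      Module.finrank_fintype_fun_eq_card, Module.finrank_fintype_fun_eq_card,
      Fintype.card_prod, Fintype.card_fin, Fintype.card_fin, Nat.mul_comm C m] at hrn
    omega
  have hsum_constC : ∀ r : ℝ, ∑ _c : Fin C, r = (C:ℝ) * r := by
    intro r
    rw [Finset.sum_const, Finset.card_univ, Fintype.card_fin, nsmul_eq_mul]
  have hsum_constm : ∀ r : ℝ, ∑ _k : Fin m, r = (m:ℝ) * r := by
    intro r
    rw [Finset.sum_const, Finset.card_univ, Fintype.card_fin, nsmul_eq_mul]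
  -- eigenspace for lam2
  have hE2 : Module.End.eigenspace f lam2
      = Submodule.map (stmt3Phi C m) (LinearMap.ker (stmt3sumF C)) := by
    ext v
    rw [hmem']
    constructor
    · intro h
      have hd : lam2 - lam1 = (m:ℝ) * (γc - γn) := by rw [hlam1, hlam2]; ring
      have hdne : lam2 - lam1 ≠ 0 := by
        rw [hd]; positivity
      have hconst : ∀ (c : Fin C) (k : Fin m), v (c, k) = v (c, 0) := by
        intro c k
        exact mul_left_cancel₀ hdne ((h c k).trans (h c 0).symm)
      have hS : ∀ c, (∑ k, v (c, k)) = (m:ℝ) * v (c, 0) := by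
        intro c
        rw [Finset.sum_congr rfl (fun k _ => hconst c k), hsum_constm]
      have hT : (∑ j, v j) = (m:ℝ) * ∑ c, v (c, 0) := by
        rw [hTsum v, Finset.sum_congr rfl (fun c _ => hS c), ← Finset.mul_sum]
      have h5 : ∀ c, (lam2 - lam1) * v (c, 0)
          = (γc - γn) * ((m:ℝ) * v (c, 0)) + γn * ((m:ℝ) * ∑ c', v (c', 0)) := by
        intro c
        have := h c 0
        rwa [hS c, hT] at this
      have h6 : (lam2 - lam1) * (∑ c, v (c, 0))
          = (γc - γn) * ((m:ℝ) * ∑ c, v (c, 0))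
            + (C:ℝ) * (γn * ((m:ℝ) * ∑ c, v (c, 0))) := by
        calc (lam2 - lam1) * (∑ c, v (c, 0))
            = ∑ c, (lam2 - lam1) * v (c, 0) := by rw [Finset.mul_sum]
          _ = ∑ c, ((γc - γn) * ((m:ℝ) * v (c, 0)) + γn * ((m:ℝ) * ∑ c', v (c', 0))) :=
              Finset.sum_congr rfl fun c _ => h5 c
          _ = (∑ c, (γc - γn) * ((m:ℝ) * v (c, 0)))
              + ∑ _c : Fin C, γn * ((m:ℝ) * ∑ c', v (c', 0)) := Finset.sum_add_distrib
          _ = (γc - γn) * ((m:ℝ) * ∑ c, v (c, 0))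
              + (C:ℝ) * (γn * ((m:ℝ) * ∑ c, v (c, 0))) := by
              rw [hsum_constC]
              congr 1
              rw [← Finset.mul_sum]
              congr 1
              rw [← Finset.mul_sum]
      have hsa : ∑ c, v (c, 0) = 0 := by
        rw [hd] at h6
        have h7 : (∑ c, v (c, 0)) * ((C:ℝ) * γn * (m:ℝ)) = 0 := by ring_nf; ring_nf at h6; linarith
        have h8 : (C:ℝ) * γn * (m:ℝ) ≠ 0 := by positivity
        exact (mul_eq_zero.mp h7).resolve_right h8
      refine Submodule.mem_map.mpr ⟨fun c => v (c, 0), ?_, ?_⟩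
      · rw [LinearMap.mem_ker]
        simpa using hsa
      · funext i
        calc (stmt3Phi C m fun c => v (c, 0)) i = v (i.1, 0) := rfl
          _ = v (i.1, i.2) := (hconst i.1 i.2).symm
          _ = v i := by rw [Prod.mk.eta]
    · intro hv
      rcases Submodule.mem_map.mp hv with ⟨a, ha, rfl⟩
      rw [LinearMap.mem_ker] at ha
      have ha' : ∑ c, a c = 0 := by simpa using ha
      intro c k
      have hS : (∑ k', (stmt3Phi C m a) (c, k')) = (m:ℝ) * a c := by
        simp only [stmt3Phi_apply]
        exact hsum_constm _
      have hT : (∑ j, (stmt3Phi C m a) j) = 0 := by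
        rw [hTsum]
        simp only [stmt3Phi_apply]
        rw [Finset.sum_congr rfl (fun c' _ => hsum_constm (a c')), ← Finset.mul_sum, ha',
          mul_zero]
      rw [hS, hT]
      simp only [stmt3Phi_apply]
      rw [hlam1, hlam2]
      ring
  have hrank2 : Module.finrank ℝ (Module.End.eigenspace f lam2) = C - 1 := by
    rw [hE2]
    have hPinj : Function.Injective (stmt3Phi C m) := by
      intro a b hab
      funext c
      exact congrFun hab (c, 0)
    rw [← LinearEquiv.finrank_eq
      (Submodule.equivMapOfInjective (stmt3Phi C m) hPinj (LinearMap.ker (stmt3sumF C)))]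
    have hsurj : Function.Surjective (stmt3sumF C) := by
      intro r
      refine ⟨fun _ => r / C, ?_⟩
      simp only [stmt3sumF_apply]
      rw [hsum_constC]
      field_simp
    have hrn := LinearMap.finrank_range_add_finrank_ker (stmt3sumF C)
    rw [LinearMap.range_eq_top.mpr hsurj, finrank_top, Module.finrank_self,
      Module.finrank_fintype_fun_eq_card, Fintype.card_fin] at hrn
    omega
  -- eigenspace for lam3 is the span of the constant vector
  have hd3 : lam3 - lam1 = (m:ℝ) * (γc - γn) + (m:ℝ) * (C:ℝ) * γn := by
    rw [hlam1, hlam3]; ring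
  have hd3pos : (0:ℝ) < lam3 - lam1 := by rw [hd3]; positivity
  have hE3 : Module.End.eigenspace f lam3
      = Submodule.span ℝ {fun _ : Fin C × Fin m => (1:ℝ)} := by
    ext v
    rw [hmem']
    constructor
    · intro h
      have hdne : lam3 - lam1 ≠ 0 := ne_of_gt hd3pos
      have hconst : ∀ (c : Fin C) (k : Fin m), v (c, k) = v (c, 0) := by
        intro c k
        exact mul_left_cancel₀ hdne ((h c k).trans (h c 0).symm)
      have hS : ∀ c, (∑ k, v (c, k)) = (m:ℝ) * v (c, 0) := by
        intro c
        rw [Finset.sum_congr rfl (fun k _ => hconst c k), hsum_constm]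
      have h5 : ∀ c, (lam3 - lam1) * v (c, 0)
          = (γc - γn) * ((m:ℝ) * v (c, 0)) + γn * (∑ j, v j) := by
        intro c
        have := h c 0
        rwa [hS c] at this
      have hccst : ∀ c : Fin C, v (c, 0) = γn * (∑ j, v j) / ((m:ℝ) * (C:ℝ) * γn) := by
        intro c
        have := h5 c
        rw [hd3] at this
        have h7 : ((m:ℝ) * (C:ℝ) * γn) * v (c, 0) = γn * (∑ j, v j) := by ring_nf; ring_nf at this; linarith
        field_simp
        apply mul_left_cancel₀ (ne_of_gt h3)
        linarith [h7]
      rw [Submodule.mem_span_singleton]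
      refine ⟨γn * (∑ j, v j) / ((m:ℝ) * (C:ℝ) * γn), ?_⟩
      funext i
      simp only [Pi.smul_apply, smul_eq_mul, mul_one]
      calc γn * (∑ j, v j) / ((m:ℝ) * (C:ℝ) * γn) = v (i.1, 0) := (hccst i.1).symm
        _ = v (i.1, i.2) := (hconst i.1 i.2).symm
        _ = v i := by rw [Prod.mk.eta]
    · intro hv
      rcases Submodule.mem_span_singleton.mp hv with ⟨r, rfl⟩
      intro c k
      simp only [Pi.smul_apply, smul_eq_mul, mul_one]
      rw [hsum_constm r, hTsum, Finset.sum_congr rfl (fun c' _ => hsum_constm r),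
        hsum_constC ((m:ℝ) * r)]
      rw [hlam1, hlam3]
      ring
  have hrank3 : Module.finrank ℝ (Module.End.eigenspace f lam3) = 1 := by
    rw [hE3]
    apply finrank_span_singleton
    intro h0
    have := congrFun h0 (⟨0, by omega⟩, ⟨0, by omega⟩)
    norm_num at this
  -- the eigenvalue characterization
  have hiff : ∀ μ : ℝ, Module.End.HasEigenvalue f μ ↔ (μ = lam1 ∨ μ = lam2 ∨ μ = lam3) := by
    intro μ
    constructor
    · intro hμ
      by_contra hcon
      push_neg at hcon
      obtain ⟨hn1, hn2, hn3⟩ := hcon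
      obtain ⟨v, hv⟩ := hμ.exists_hasEigenvector
      have hmemv := (hmem' μ v).mp hv.1
      have hd : μ - lam1 ≠ 0 := sub_ne_zero.mpr hn1
      have hconst : ∀ (c : Fin C) (k : Fin m), v (c, k) = v (c, 0) := by
        intro c k
        exact mul_left_cancel₀ hd ((hmemv c k).trans (hmemv c 0).symm)
      have hS : ∀ c, (∑ k, v (c, k)) = (m:ℝ) * v (c, 0) := by
        intro c
        rw [Finset.sum_congr rfl (fun k _ => hconst c k), hsum_constm]
      have hT : (∑ j, v j) = (m:ℝ) * ∑ c, v (c, 0) := by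
        rw [hTsum v, Finset.sum_congr rfl (fun c _ => hS c), ← Finset.mul_sum]
      have key : ∀ c, (μ - lam2) * v (c, 0) = γn * ((m:ℝ) * ∑ c', v (c', 0)) := by
        intro c
        have h5 := hmemv c 0
        rw [hS c, hT, hlam1] at h5
        rw [hlam2]
        linear_combination h5
      have key2 : (μ - lam3) * (∑ c, v (c, 0)) = 0 := by
        have h6 : (μ - lam2) * ∑ c, v (c, 0)
            = (C:ℝ) * (γn * ((m:ℝ) * ∑ c', v (c', 0))) := by
          rw [Finset.mul_sum, Finset.sum_congr rfl (fun c _ => key c), hsum_constC]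
        rw [hlam2] at h6
        rw [hlam3]
        linear_combination h6
      have hsa : ∑ c, v (c, 0) = 0 :=
        (mul_eq_zero.mp key2).resolve_left (sub_ne_zero.mpr hn3)
      have hz : ∀ c, v (c, 0) = 0 := by
        intro c
        have := key c
        rw [hsa, mul_zero, mul_zero] at this
        exact (mul_eq_zero.mp this).resolve_left (sub_ne_zero.mpr hn2)
      apply hv.2
      funext i
      calc v i = v (i.1, i.2) := by rw [Prod.mk.eta]
        _ = v (i.1, 0) := hconst i.1 i.2
        _ = 0 := hz i.1
    · intro hμ
      rw [Module.End.hasEigenvalue_iff]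
      have hCm : C < m * C := by nlinarith
      rcases hμ with rfl | rfl | rfl
      · intro hb
        rw [hb, finrank_bot] at hrank1
        omega
      · intro hb
        rw [hb, finrank_bot] at hrank2
        omega
      · intro hb
        rw [hb, finrank_bot] at hrank3
        omega
  -- positive definiteness
  have hherm : K.IsHermitian := by
    rw [Matrix.IsHermitian]
    ext i j
    rw [Matrix.conjTranspose_apply, hK, hK, star_trivial]
    by_cases h : i = j
    · simp [h]
    · have h' : ¬ j = i := fun hh => h hh.symm
      rw [if_neg h', if_neg h]
      by_cases h2 : i.1 = j.1
      · rw [if_pos h2, if_pos h2.symm]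
      · rw [if_neg h2, if_neg (fun hh => h2 hh.symm)]
  have hposdef : K.PosDef := by
    refine Matrix.PosDef.of_dotProduct_mulVec_pos hherm ?_
    intro x hx
    have hmul : K *ᵥ x = f x := by
      rw [hfdef, Matrix.toLin'_apply]
    have hquad : dotProduct (star x) (K *ᵥ x) =
        lam1 * (∑ i, x i * x i)
          + (γc - γn) * (∑ c, (∑ k, x (c, k)) * (∑ k, x (c, k)))
          + γn * ((∑ j, x j) * (∑ j, x j)) := by
      calc dotProduct (star x) (K *ᵥ x) = ∑ i, x i * f x i := by
            simp [dotProduct, hmul]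
        _ = ∑ i, (lam1 * (x i * x i) + (γc - γn) * (x i * ∑ k, x (i.1, k))
              + γn * (x i * ∑ j, x j)) := by
            apply Finset.sum_congr rfl
            intro i _
            rw [hApply]
            ring
        _ = lam1 * (∑ i, x i * x i) + (γc - γn) * (∑ i : Fin C × Fin m, x i * ∑ k, x (i.1, k))
              + γn * (∑ i : Fin C × Fin m, x i * ∑ j, x j) := by
            rw [Finset.sum_add_distrib, Finset.sum_add_distrib, ← Finset.mul_sum,
              ← Finset.mul_sum, ← Finset.mul_sum]
        _ = lam1 * (∑ i, x i * x i)
              + (γc - γn) * (∑ c, (∑ k, x (c, k)) * (∑ k, x (c, k)))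
              + γn * ((∑ j, x j) * (∑ j, x j)) := by
            have hmid : (∑ i : Fin C × Fin m, x i * ∑ k, x (i.1, k))
                = ∑ c, (∑ k, x (c, k)) * (∑ k, x (c, k)) := by
              rw [Fintype.sum_prod_type]
              apply Finset.sum_congr rfl
              intro c _
              have hy : ∀ y : Fin m, x (c, y) * (∑ k, x ((c, y).1, k))
                  = x (c, y) * (∑ k, x (c, k)) := fun y => rfl
              rw [Finset.sum_congr rfl (fun y _ => hy y), ← Finset.sum_mul]
            have hlast : (∑ i : Fin C × Fin m, x i * ∑ j, x j)
                = (∑ j, x j) * (∑ j, x j) := by rw [← Finset.sum_mul]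
            rw [hmid, hlast]
    rw [hquad]
    have hx2 : 0 < ∑ i, x i * x i := by
      apply Finset.sum_pos'
      · intro i _
        exact mul_self_nonneg _
      · obtain ⟨i0, hi0⟩ : ∃ i, x i ≠ 0 := by
          by_contra hh
          push_neg at hh
          exact hx (funext hh)
        exact ⟨i0, Finset.mem_univ _, mul_self_pos.mpr hi0⟩
    have hq1 : 0 ≤ ∑ c, (∑ k, x (c, k)) * (∑ k, x (c, k)) :=
      Finset.sum_nonneg fun c _ => mul_self_nonneg _
    have hq2 : 0 ≤ (∑ j, x j) * (∑ j, x j) := mul_self_nonneg _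
    have := mul_pos hdc hx2
    nlinarith [mul_nonneg (le_of_lt hcn) hq1, mul_nonneg (le_of_lt h3) hq2]
  exact ⟨hiff, hrank1, hrank2, hrank3, hposdef⟩
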